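/- Every finite N-free ordered set which is not a chain has an even number of greedy linear extensions. -/

import Mathlib

variable {α : Type*}

/-- `x` is a minimal element of the subposet induced on the finite set `s`. -/
def IsMinimalIn [PartialOrder α] (s : Finset α) (x : α) : Prop :=
  x ∈ s ∧ ∀ y ∈ s, ¬ y < x

/-- A valid greedy choice of the next element, given the previously chosen element `p`
(`none` at the start) and the set `s` of not-yet-chosen elements: the next element must
be minimal among the remaining elements and, moreover, if some element strictly above `p`
is minimal among the remaining elements, then the next element must be strictly above `p`
(i.e. it is a minimal element of `U(p)` that can extend the linear extension). -/
def GreedyNext [PartialOrder α] (p : Option α) (s : Finset α) (x : α) : Prop :=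
  IsMinimalIn s x ∧
    ∀ q : α, p = some q → (∃ v ∈ s, q < v ∧ IsMinimalIn s v) → q < x

/-- The list is a valid greedy enumeration of the finite set `s`, the previously chosen
element being `p` (`none` at the start). -/
def GreedyFrom [PartialOrder α] [DecidableEq α] :
    Option α → Finset α → List α → Prop
  | _, s, [] => s = ∅
  | p, s, x :: l => GreedyNext p s x ∧ GreedyFrom (some x) (s.erase x) l

/-- `l` is a greedy linear extension of the finite poset `α`, presented as the list of
its elements in increasing order. -/
def IsGreedyLE [PartialOrder α] [DecidableEq α] [Fintype α] (l : List α) : Prop :=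
  GreedyFrom (none : Option α) Finset.univ l

/-- The poset contains an "N": `a ≺ b`, `c ≺ b`, `c ≺ d` with `a, b, c, d` pairwise
distinct and `a` incomparable to `d`.  A poset is N-free when `¬ HasN`. -/
def HasN (α : Type*) [PartialOrder α] : Prop :=
  ∃ a b c d : α, a ≠ b ∧ a ≠ c ∧ a ≠ d ∧ b ≠ c ∧ b ≠ d ∧ c ≠ d ∧
    a ⋖ b ∧ c ⋖ b ∧ c ⋖ d ∧ ¬ a ≤ d ∧ ¬ d ≤ a

section Aux
variable [PartialOrder α] [DecidableEq α]

theorem finset_exists_minimal' (s : Finset α) (hs : s.Nonempty) :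
    ∃ m ∈ s, ∀ x ∈ s, ¬ x < m := by
  obtain ⟨m, hm, hmin⟩ := Finset.exists_minimal hs
  exact ⟨m, hm, fun x hx hlt => hlt.not_ge (hmin hx hlt.le)⟩

theorem finset_exists_maximal' (s : Finset α) (hs : s.Nonempty) :
    ∃ m ∈ s, ∀ x ∈ s, ¬ m < x := by
  obtain ⟨m, hm, hmax⟩ := Finset.exists_maximal hs
  exact ⟨m, hm, fun x hx hlt => hlt.not_ge (hmax hx hlt.le)⟩

/-- no remaining minimal element lies above `c` : a "break" must happen. -/
def Stuck (c : α) (s : Finset α) : Prop := ¬ ∃ v ∈ s, c < v ∧ IsMinimalIn s v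

/-- maximal greedy chain starting in state (p, s) -/
def GreedyChain : Option α → Finset α → List α → Prop
  | p, s, [] => ∀ q : α, p = some q → Stuck q s
  | p, s, x :: l => GreedyNext p s x ∧ (∀ q : α, p = some q → q < x) ∧
      GreedyChain (some x) (s.erase x) l

theorem greedyFrom_nodup_toFinset :
    ∀ {l : List α} {p s}, GreedyFrom p s l → l.Nodup ∧ l.toFinset = s := by
  intro l
  induction l with
  | nil => intro p s h; simpa [GreedyFrom] using h.symm
  | cons x l ih =>
    intro p s h
    obtain ⟨hx, hrest⟩ := h
    obtain ⟨hnd, htf⟩ := ih hrest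
    have hxs : x ∈ s := hx.1.1
    have hxl : x ∉ l := by
      intro hmem
      have : x ∈ s.erase x := htf ▸ List.mem_toFinset.2 hmem
      simp at this
    refine ⟨List.nodup_cons.2 ⟨hxl, hnd⟩, ?_⟩
    simp [List.toFinset_cons, htf, Finset.insert_erase hxs]

theorem stuck_irrel {c : α} {s : Finset α} (hst : Stuck c s) (l : List α) :
    GreedyFrom (some c) s l ↔ GreedyFrom none s l := by
  cases l with
  | nil => rfl
  | cons x l =>
    unfold GreedyFrom GreedyNext
    constructor
    · rintro ⟨⟨h1, _⟩, h3⟩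
      exact ⟨⟨h1, by simp⟩, h3⟩
    · rintro ⟨⟨h1, _⟩, h3⟩
      refine ⟨⟨h1, ?_⟩, h3⟩
      rintro q rfl2 hex
      cases rfl2
      exact absurd hex hst

theorem greedyChain_props :
    ∀ {C : List α} {p s}, GreedyChain p s C →
      C.toFinset ⊆ s ∧ C.Nodup ∧ C.Chain' (· < ·) := by
  intro C
  induction C with
  | nil => intro p s _; simp [List.Chain']
  | cons x C ih =>
    intro p s h
    obtain ⟨hx, hlt, hrest⟩ := h
    obtain ⟨hsub, hnd, hch⟩ := ih hrest
    have hxs : x ∈ s := hx.1.1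
    have hxC : x ∉ C := by
      intro hmem
      have : x ∈ s.erase x := hsub (List.mem_toFinset.2 hmem)
      simp at this
    refine ⟨?_, List.nodup_cons.2 ⟨hxC, hnd⟩, ?_⟩
    · intro y hy
      simp only [List.toFinset_cons, Finset.mem_insert, List.mem_toFinset] at hy
      rcases hy with h | h
      · exact h ▸ hxs
      · exact Finset.mem_of_mem_erase (hsub (List.mem_toFinset.2 h))
    · refine List.isChain_cons.2 ⟨?_, hch⟩
      intro y hy
      cases C with
      | nil => simp at hy
      | cons z C' =>
        simp at hy
        subst hy
        exact hrest.2.1 x rfl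

theorem greedyChain_down :
    ∀ {C : List α} {p s}, GreedyChain p s C →
      ∀ y ∈ s, ∀ c ∈ C, y < c → y ∈ C.toFinset := by
  intro C
  induction C with
  | nil => intro p s _ y _ c hc; simp at hc
  | cons x C ih =>
    intro p s h y hy c hc hyc
    obtain ⟨hx, _, hrest⟩ := h
    by_cases hyx : y = x
    · simp [hyx]
    rcases List.mem_cons.1 hc with rfl | hc
    · exact absurd hyc (hx.1.2 y hy)
    · have : y ∈ C.toFinset :=
        ih hrest y (Finset.mem_erase.2 ⟨hyx, hy⟩) c hc hyc
      simp [this]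

end Aux

section Aux2
variable [PartialOrder α] [DecidableEq α]

theorem sdiff_cons_toFinset (s : Finset α) (x : α) (C : List α) :
    s \ (x :: C).toFinset = (s.erase x) \ C.toFinset := by
  ext y
  simp only [Finset.mem_sdiff, List.toFinset_cons, Finset.mem_insert, Finset.mem_erase,
    List.mem_toFinset]
  tauto

theorem greedyChain_append {C t : List α} :
    ∀ {p s}, GreedyChain p s C → GreedyFrom none (s \ C.toFinset) t →
      GreedyFrom p s (C ++ t) := by
  induction C with
  | nil =>
    intro p s hC ht
    simp only [List.toFinset_nil, Finset.sdiff_empty] at ht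
    cases p with
    | none => exact ht
    | some c => exact (stuck_irrel (hC c rfl) t).2 ht
  | cons x C ih =>
    intro p s hC ht
    obtain ⟨hx, _, hrest⟩ := hC
    rw [sdiff_cons_toFinset] at ht
    exact ⟨hx, ih hrest ht⟩

theorem greedyFrom_split :
    ∀ {l : List α} {s c}, GreedyFrom (some c) s l →
      ∃ C t, GreedyChain (some c) s C ∧ GreedyFrom none (s \ C.toFinset) t ∧ l = C ++ t := by
  intro l
  induction l with
  | nil =>
    intro s c h
    refine ⟨[], [], ?_, ?_, rfl⟩
    · intro q hq
      cases hq
      intro ⟨v, hv, _⟩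
      rw [h] at hv
      simp at hv
    · simpa [GreedyFrom] using h
  | cons x l ih =>
    intro s c h
    obtain ⟨hx, hrest⟩ := h
    by_cases hst : Stuck c s
    · refine ⟨[], x :: l, ?_, ?_, rfl⟩
      · intro q hq; cases hq; exact hst
      · simp only [List.toFinset_nil, Finset.sdiff_empty]
        exact (stuck_irrel hst _).1 ⟨hx, hrest⟩
    · have hcx : c < x := hx.2 c rfl (not_not.1 hst)
      obtain ⟨C, t, hC, ht, hl⟩ := ih hrest
      refine ⟨x :: C, t, ⟨hx, ?_, hC⟩, ?_, by simp [hl]⟩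
      · intro q hq; cases hq; exact hcx
      · rwa [sdiff_cons_toFinset]

theorem greedyChain_unique_aux :
    ∀ {C₁ C₂ t₁ t₂ : List α} {s c}, GreedyChain (some c) s C₁ → GreedyChain (some c) s C₂ →
      C₁ ++ t₁ = C₂ ++ t₂ → C₁ = C₂ := by
  intro C₁
  induction C₁ with
  | nil =>
    intro C₂ t₁ t₂ s c h₁ h₂ heq
    cases C₂ with
    | nil => rfl
    | cons y C₂' =>
      exact absurd ⟨y, h₂.1.1.1, h₂.2.1 c rfl, h₂.1.1⟩ (h₁ c rfl)
  | cons x C₁' ih =>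
    intro C₂ t₁ t₂ s c h₁ h₂ heq
    cases C₂ with
    | nil => exact absurd ⟨x, h₁.1.1.1, h₁.2.1 c rfl, h₁.1.1⟩ (h₂ c rfl)
    | cons y C₂' =>
      simp only [List.cons_append, List.cons.injEq] at heq
      obtain ⟨rfl, heq⟩ := heq
      rw [ih h₁.2.2 h₂.2.2 heq]

theorem greedyChain_unique {C₁ C₂ t₁ t₂ : List α} {s : Finset α}
    (h₁ : GreedyChain none s C₁) (h₂ : GreedyChain none s C₂)
    (hne₁ : C₁ ≠ []) (hne₂ : C₂ ≠ [])
    (heq : C₁ ++ t₁ = C₂ ++ t₂) : C₁ = C₂ := by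
  cases C₁ with
  | nil => exact absurd rfl hne₁
  | cons x C₁' =>
    cases C₂ with
    | nil => exact absurd rfl hne₂
    | cons y C₂' =>
      simp only [List.cons_append, List.cons.injEq] at heq
      obtain ⟨rfl, heq⟩ := heq
      rw [greedyChain_unique_aux h₁.2.2 h₂.2.2 heq]

/-- a chain (in the induced order) has exactly one greedy enumeration, from any state. -/
theorem chain_greedy_unique :
    ∀ (s : Finset α), (∀ a ∈ s, ∀ b ∈ s, a ≤ b ∨ b ≤ a) →
      ∀ p, ∃! l, GreedyFrom p s l := by
  intro s
  induction s using Finset.strongInduction with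
  | _ s ih =>
    intro hch p
    rcases Finset.eq_empty_or_nonempty s with rfl | hne
    · refine ⟨[], rfl, ?_⟩
      intro l hl
      cases l with
      | nil => rfl
      | cons x l => exact absurd hl.1.1.1 (by simp)
    · obtain ⟨m, hm, hmin⟩ := finset_exists_minimal' s hne
      have hleast : ∀ x ∈ s, m ≤ x := by
        intro x hx
        rcases hch m hm x hx with h | h
        · exact h
        · exact le_of_eq ((h.lt_or_eq).resolve_left (hmin x hx)).symm
      have herase : s.erase m ⊂ s := Finset.erase_ssubset hm
      obtain ⟨l', hl', hluniq⟩ := ih _ herase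
        (fun a ha b hb => hch a (Finset.mem_of_mem_erase ha) b (Finset.mem_of_mem_erase hb))
        (some m)
      have hnext : ∀ q x, GreedyNext q s x → x = m := by
        intro q x hx
        have hnlt := hx.1.2 m hm
        exact (((hleast x hx.1.1).lt_or_eq).resolve_left hnlt).symm
      refine ⟨m :: l', ⟨⟨⟨hm, hmin⟩, ?_⟩, hl'⟩, ?_⟩
      · rintro q rfl ⟨v, hv, hqv, hvmin⟩
        have : v = m := (((hleast v hv).lt_or_eq).resolve_left (hvmin.2 m hm)).symm
        exact this ▸ hqv
      · intro l hl
        cases l with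
        | nil =>
          have hse : s = ∅ := hl
          rw [hse] at hm
          simp at hm
        | cons x l'' =>
          have hxm : x = m := hnext p x hl.1
          subst hxm
          rw [hluniq l'' hl.2]

end Aux2

set_option linter.unusedSectionVars false

section Aux3
variable [PartialOrder α] [DecidableEq α]

theorem chainF_exists_least {D : Finset α} (hch : ∀ a ∈ D, ∀ b ∈ D, a ≤ b ∨ b ≤ a)
    (hne : D.Nonempty) : ∃ d ∈ D, ∀ e ∈ D, d ≤ e := by
  obtain ⟨m, hm, hmin⟩ := finset_exists_minimal' D hne
  refine ⟨m, hm, fun e he => ?_⟩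
  rcases hch m hm e he with h | h
  · exact h
  · exact le_of_eq ((h.lt_or_eq).resolve_left (hmin e he)).symm

theorem chainF_exists_greatest {D : Finset α} (hch : ∀ a ∈ D, ∀ b ∈ D, a ≤ b ∨ b ≤ a)
    (hne : D.Nonempty) : ∃ d ∈ D, ∀ e ∈ D, e ≤ d := by
  obtain ⟨m, hm, hmax⟩ := finset_exists_maximal' D hne
  refine ⟨m, hm, fun e he => ?_⟩
  rcases hch m hm e he with h | h
  · exact le_of_eq ((h.lt_or_eq).resolve_left (hmax e he)).symm
  · exact h

theorem chainF_exists_list :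
    ∀ (D : Finset α), (∀ a ∈ D, ∀ b ∈ D, a ≤ b ∨ b ≤ a) →
      ∃ l : List α, l.Chain' (· < ·) ∧ l.toFinset = D := by
  intro D
  induction D using Finset.strongInduction with
  | _ D ih =>
    intro hch
    rcases Finset.eq_empty_or_nonempty D with rfl | hne
    · exact ⟨[], by simp [List.Chain'], by simp⟩
    · obtain ⟨m, hm, hleast⟩ := chainF_exists_least hch hne
      obtain ⟨l', hl', htf⟩ := ih _ (Finset.erase_ssubset hm)
        (fun a ha b hb => hch a (Finset.mem_of_mem_erase ha) b (Finset.mem_of_mem_erase hb))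
      refine ⟨m :: l', List.isChain_cons.2 ⟨?_, hl'⟩, ?_⟩
      · intro y hy
        have hyl : y ∈ l' := List.mem_of_mem_head? hy
        have : y ∈ D.erase m := htf ▸ List.mem_toFinset.2 hyl
        exact lt_of_le_of_ne (hleast y (Finset.mem_of_mem_erase this))
          (Ne.symm (Finset.mem_erase.1 this).1)
      · simp [htf, Finset.insert_erase hm]

theorem chain'_lt_nodup {l : List α} (h : l.Chain' (· < ·)) : l.Nodup := by
  haveI : IsTrans α (· < ·) := ⟨fun _ _ _ => lt_trans⟩
  exact (List.isChain_iff_pairwise.1 h).imp ne_of_lt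

theorem chain'_lt_toFinset_eq {l₁ l₂ : List α} (h₁ : l₁.Chain' (· < ·))
    (h₂ : l₂.Chain' (· < ·)) (h : l₁.toFinset = l₂.toFinset) : l₁ = l₂ := by
  haveI : IsTrans α (· < ·) := ⟨fun _ _ _ => lt_trans⟩
  haveI : IsAntisymm α (· < ·) := ⟨fun a b h1 h2 => absurd h2 (asymm h1)⟩
  exact List.Perm.eq_of_pairwise (fun a b _ _ h1 h2 => absurd h2 (asymm h1))
    (List.isChain_iff_pairwise.1 h₁) (List.isChain_iff_pairwise.1 h₂)
    (List.perm_of_nodup_nodup_toFinset_eq (chain'_lt_nodup h₁) (chain'_lt_nodup h₂) h)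

theorem exists_le_covBy [Fintype α] {a b : α} (h : a < b) : ∃ w, a ≤ w ∧ w ⋖ b := by
  classical
  have hne : (Finset.univ.filter (fun z => a ≤ z ∧ z < b)).Nonempty :=
    ⟨a, by simp [h]⟩
  obtain ⟨w, hw, hmax⟩ := finset_exists_maximal' _ hne
  simp only [Finset.mem_filter, Finset.mem_univ, true_and] at hw
  refine ⟨w, hw.1, hw.2, fun z h1 h2 => ?_⟩
  exact hmax z (by simp [le_trans hw.1 h1.le, h2]) h1

end Aux3

theorem even_card_of_fpf {β : Type*} [DecidableEq β] :
    ∀ (X : Finset β) (f : β → β), (∀ x ∈ X, f x ∈ X) → (∀ x ∈ X, f (f x) = x) →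
      (∀ x ∈ X, f x ≠ x) → Even X.card := by
  intro X
  induction X using Finset.strongInduction with
  | _ X ih =>
    intro f hmap hinv hne
    rcases Finset.eq_empty_or_nonempty X with rfl | ⟨x, hx⟩
    · simp
    · set X' := (X.erase x).erase (f x) with hX'
      have hfx : f x ∈ X := hmap x hx
      have hfxe : f x ∈ X.erase x := Finset.mem_erase.2 ⟨hne x hx, hfx⟩
      have hsub : X' ⊂ X :=
        lt_of_le_of_lt (Finset.le_iff_subset.2 (Finset.erase_subset _ _)) (Finset.erase_ssubset hx)
      have hcard : X.card = X'.card + 2 := by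
        rw [hX', Finset.card_erase_of_mem hfxe, Finset.card_erase_of_mem hx]
        have h2 : 2 ≤ X.card := Finset.one_lt_card.2 ⟨x, hx, f x, hfx, (hne x hx).symm⟩
        omega
      have hmem' : ∀ y, y ∈ X' ↔ y ∈ X ∧ y ≠ x ∧ y ≠ f x := by
        intro y; simp [hX', Finset.mem_erase]; tauto
      have hmap' : ∀ y ∈ X', f y ∈ X' := by
        intro y hy
        rw [hmem'] at hy ⊢
        obtain ⟨hyX, hyx, hyfx⟩ := hy
        refine ⟨hmap y hyX, ?_, ?_⟩
        · intro hfy; exact hyfx (by rw [← hinv y hyX, hfy])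
        · intro hfy
          have := congrArg f hfy
          rw [hinv y hyX, hinv x hx] at this
          exact hyx this
      obtain ⟨k, hk⟩ := ih X' hsub f hmap'
        (fun y hy => hinv y ((hmem' y).1 hy).1)
        (fun y hy => hne y ((hmem' y).1 hy).1)
      exact ⟨k + 1, by omega⟩

section Aux4
variable [PartialOrder α] [DecidableEq α]

/-- the induced order on `X` is total -/
def Chn (X : Finset α) : Prop := ∀ a ∈ X, ∀ b ∈ X, a ≤ b ∨ b ≤ a

/-- `s` is an up-set -/
def IsUpF (s : Finset α) : Prop := ∀ a ∈ s, ∀ b, a ≤ b → b ∈ s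

/-- nonempty down-closed chains with chain complement -/
def TT (s C : Finset α) : Prop :=
  C.Nonempty ∧ C ⊆ s ∧ Chn C ∧ (∀ y ∈ s, ∀ c ∈ C, y < c → y ∈ C) ∧ Chn (s \ C)

theorem chn_of_chain' : ∀ {l : List α}, l.Chain' (· < ·) → Chn l.toFinset := by
  intro l
  induction l with
  | nil => intro _ a ha; simp at ha
  | cons x l ih =>
    intro h a ha b hb
    haveI : IsTrans α (· < ·) := ⟨fun _ _ _ => lt_trans⟩
    have hpw := List.isChain_iff_pairwise.1 h
    have hxlt : ∀ c ∈ l, x < c := (List.pairwise_cons.1 hpw).1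
    simp only [List.toFinset_cons, Finset.mem_insert, List.mem_toFinset] at ha hb
    rcases ha with rfl | ha
    · rcases hb with rfl | hb
      · exact Or.inl le_rfl
      · exact Or.inl (hxlt b hb).le
    · rcases hb with rfl | hb
      · exact Or.inr (hxlt a ha).le
      · exact ih h.tail a (List.mem_toFinset.2 ha) b (List.mem_toFinset.2 hb)

theorem TT_of_block {s : Finset α} {C : List α} (hC : GreedyChain none s C)
    (hne : C ≠ []) (hcc : Chn (s \ C.toFinset)) : TT s C.toFinset := by
  obtain ⟨hsub, hnd, hch⟩ := greedyChain_props hC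
  refine ⟨?_, hsub, chn_of_chain' hch, ?_, hcc⟩
  · cases C with
    | nil => exact absurd rfl hne
    | cons x l => exact ⟨x, by simp⟩
  · intro y hy c hc hyc
    exact greedyChain_down hC y hy c (List.mem_toFinset.1 hc) hyc

theorem greedyChain_of_invariants :
    ∀ (l : List α) (p : Option α) (s1 : Finset α), l.Chain' (· < ·) → l.toFinset ⊆ s1 →
      (∀ y ∈ s1, ∀ c ∈ l, y < c → y ∈ l.toFinset) →
      (∀ q : α, p = some q → ∀ h ∈ l.head?, q < h) →
      (∀ q : α, p = some q → l = [] → Stuck q s1) →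
      (∀ x ∈ l, (∀ c ∈ l, c ≤ x) → Stuck x (s1 \ l.toFinset)) →
      GreedyChain p s1 l := by
  intro l
  induction l with
  | nil =>
    intro p s1 _ _ _ _ hst0 _ q hq
    exact hst0 q hq rfl
  | cons x l ih =>
    intro p s1 hch hsub hdown hhead hst0 hst
    haveI : IsTrans α (· < ·) := ⟨fun _ _ _ => lt_trans⟩
    have hpw := List.isChain_iff_pairwise.1 hch
    have hxlt : ∀ c ∈ l, x < c := (List.pairwise_cons.1 hpw).1
    have hxs : x ∈ s1 := hsub (by simp)
    have hmin : IsMinimalIn s1 x := by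
      refine ⟨hxs, fun y hy hyx => ?_⟩
      have := hdown y hy x (by simp) hyx
      simp only [List.toFinset_cons, Finset.mem_insert, List.mem_toFinset] at this
      rcases this with rfl | hmem
      · exact lt_irrefl _ hyx
      · exact asymm hyx (hxlt y hmem)
    refine ⟨⟨hmin, fun q hq _ => hhead q hq x rfl⟩, fun q hq => hhead q hq x rfl, ?_⟩
    refine ih (some x) (s1.erase x) hch.tail ?_ ?_ ?_ ?_ ?_
    · intro y hy
      have hyl := List.mem_toFinset.1 hy
      refine Finset.mem_erase.2 ⟨fun h => ?_, hsub (by simp [hyl])⟩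
      exact lt_irrefl x (h ▸ hxlt y hyl)
    · intro y hy c hc hyc
      have hy1 : y ∈ s1 := Finset.mem_of_mem_erase hy
      have := hdown y hy1 c (by simp [hc]) hyc
      simp only [List.toFinset_cons, Finset.mem_insert, List.mem_toFinset] at this
      rcases this with rfl | hmem
      · exact absurd rfl (Finset.mem_erase.1 hy).1
      · exact List.mem_toFinset.2 hmem
    · rintro q hq h hh
      cases hq
      exact hxlt h (List.mem_of_mem_head? hh)
    · rintro q hq rfl
      cases hq
      have h1 := hst x (by simp) (by simp)
      have h2 : s1 \ ([x] : List α).toFinset = s1.erase x := by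
        ext y; simp [Finset.mem_erase]; tauto
      rwa [h2] at h1
    · intro z hz hzmax
      have h1 := hst z (by simp [hz]) (by
        intro c hc
        rcases List.mem_cons.1 hc with rfl | hc
        · exact (hxlt z hz).le
        · exact hzmax c hc)
      rwa [sdiff_cons_toFinset] at h1

theorem block_of_TT {s X : Finset α} (hnc : ¬ Chn s) (hX : TT s X) :
    ∃ C : List α, C.Chain' (· < ·) ∧ C.toFinset = X ∧ C ≠ [] ∧ GreedyChain none s C := by
  obtain ⟨hXne, hXsub, hXch, hXdown, hXcc⟩ := hX
  obtain ⟨l, hch, htf⟩ := chainF_exists_list X hXch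
  refine ⟨l, hch, htf, ?_, ?_⟩
  · rintro rfl
    rw [List.toFinset_nil] at htf
    exact hXne.ne_empty htf.symm
  · refine greedyChain_of_invariants l none s hch (htf ▸ hXsub) ?_ (by simp) (by simp) ?_
    · intro y hy c hc hyc
      rw [htf]
      exact hXdown y hy c (by rw [← htf]; exact List.mem_toFinset.2 hc) hyc
    · intro x hx hxmax
      rw [htf]
      rintro ⟨v, hv, hxv, hvmin⟩
      apply hnc
      have hvleast : ∀ e ∈ s \ X, v ≤ e := by
        intro e he
        rcases hXcc v hv e he with h | h
        · exact h
        · exact le_of_eq ((h.lt_or_eq).resolve_left (hvmin.2 e he)).symm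
      intro a ha b hb
      have key : ∀ c ∈ X, ∀ d ∈ s \ X, c ≤ d := by
        intro c hc d hd
        have hcl : c ∈ l := by rw [← htf] at hc; exact List.mem_toFinset.1 hc
        calc c ≤ x := hxmax c hcl
        _ ≤ v := hxv.le
        _ ≤ d := hvleast d hd
      by_cases haX : a ∈ X <;> by_cases hbX : b ∈ X
      · exact hXch a haX b hbX
      · exact Or.inl (key a haX b (Finset.mem_sdiff.2 ⟨hb, hbX⟩))
      · exact Or.inr (key b hbX a (Finset.mem_sdiff.2 ⟨ha, haX⟩))
      · exact hXcc a (Finset.mem_sdiff.2 ⟨ha, haX⟩) b (Finset.mem_sdiff.2 ⟨hb, hbX⟩)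

end Aux4

section Aux5
variable [PartialOrder α] [DecidableEq α]

theorem chn_of_parts {s C : Finset α} (hsub : C ⊆ s) (h1 : Chn C) (h2 : Chn (s \ C))
    (hcd : ∀ c ∈ C, ∀ d ∈ s \ C, c ≤ d) : Chn s := by
  intro a ha b hb
  by_cases haC : a ∈ C <;> by_cases hbC : b ∈ C
  · exact h1 a haC b hbC
  · exact Or.inl (hcd a haC b (Finset.mem_sdiff.2 ⟨hb, hbC⟩))
  · exact Or.inr (hcd b hbC a (Finset.mem_sdiff.2 ⟨ha, haC⟩))
  · exact h2 a (Finset.mem_sdiff.2 ⟨ha, haC⟩) b (Finset.mem_sdiff.2 ⟨hb, hbC⟩)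

open scoped Classical in
/-- The involution on nonempty down-closed chains with chain complement. -/
noncomputable def phiInv (s C : Finset α) : Finset α :=
  if h : ∃ d, d ∈ s \ C ∧ ∀ e ∈ s \ C, d ≤ e then
    (C.filter (· < h.choose)) ∪
      ((s \ C).filter (fun d => ∀ e ∈ s \ C, e ≤ d → ∀ c ∈ C, c < e → c < h.choose))
  else C

theorem phiInv_mem {s C : Finset α} {dmin : α}
    (hd : dmin ∈ s \ C ∧ ∀ e ∈ s \ C, dmin ≤ e) (x : α) :
    x ∈ phiInv s C ↔ ((x ∈ C ∧ x < dmin) ∨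
      (x ∈ s \ C ∧ ∀ e ∈ s \ C, e ≤ x → ∀ c ∈ C, c < e → c < dmin)) := by
  classical
  have hex : ∃ d, d ∈ s \ C ∧ ∀ e ∈ s \ C, d ≤ e := ⟨dmin, hd⟩
  have hch : hex.choose = dmin :=
    le_antisymm (hex.choose_spec.2 dmin hd.1) (hd.2 _ hex.choose_spec.1)
  rw [phiInv, dif_pos hex, hch]
  simp only [Finset.mem_union, Finset.mem_filter]

end Aux5

section Aux6
variable [PartialOrder α] [DecidableEq α] [Fintype α]

theorem phiInv_main (hN : ¬ HasN α) {s : Finset α} (hup : IsUpF s) (hnc : ¬ Chn s)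
    {C : Finset α} (hC : TT s C) :
    TT s (phiInv s C) ∧ phiInv s (phiInv s C) = C ∧ phiInv s C ≠ C := by
  classical
  obtain ⟨hCne, hCsub, hCch, hCdown, hDch⟩ := hC
  have hDne : (s \ C).Nonempty := by
    rcases Finset.eq_empty_or_nonempty (s \ C) with h | h
    · exfalso
      apply hnc
      have hsC : s = C := by
        apply Finset.Subset.antisymm _ hCsub
        intro x hx
        by_contra hxC
        have hx2 : x ∈ s \ C := Finset.mem_sdiff.2 ⟨hx, hxC⟩
        rw [h] at hx2
        simp at hx2
      exact hsC ▸ hCch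
    · exact h
  obtain ⟨dmin, hdminD, hdminle⟩ := chainF_exists_least hDch hDne
  obtain ⟨cmax, hcmaxC, hcmaxge⟩ := chainF_exists_greatest hCch hCne
  have hdmins : dmin ∈ s := (Finset.mem_sdiff.1 hdminD).1
  have hdminC : dmin ∉ C := (Finset.mem_sdiff.1 hdminD).2
  set Bp : α → Prop := fun d => ∀ e ∈ s \ C, e ≤ d → ∀ c ∈ C, c < e → c < dmin with hBp
  have hmem : ∀ x, x ∈ phiInv s C ↔ ((x ∈ C ∧ x < dmin) ∨ (x ∈ s \ C ∧ Bp x)) :=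
    phiInv_mem ⟨hdminD, hdminle⟩
  have hBdmin : Bp dmin := fun e he hed c hc hce => lt_of_lt_of_le hce hed
  have hcmaxnlt : ¬ cmax < dmin := by
    intro hlt
    apply hnc
    refine chn_of_parts hCsub hCch hDch ?_
    intro c hc d hd
    exact le_trans (hcmaxge c hc) (le_trans hlt.le (hdminle d hd))
  have hF4 : ∀ d, d ∈ s \ C → Bp d → ∀ c ∈ C, c < d → c < dmin := by
    intro d hd hB c hc hcd
    exact hB d hd le_rfl c hc hcd
  have hDC : ∀ x, x ∈ s \ C → x ∉ C := fun x hx => (Finset.mem_sdiff.1 hx).2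
  have hDs : ∀ x, x ∈ s \ C → x ∈ s := fun x hx => (Finset.mem_sdiff.1 hx).1
  have hCs : ∀ x, x ∈ C → x ∈ s := fun x hx => hCsub hx
  have hBsub : ∀ x, x ∈ (s \ C).filter Bp → x ∈ s \ C :=
    fun x hx => (Finset.mem_filter.1 hx).1
  obtain ⟨dB, hdBmem, hdBge⟩ := chainF_exists_greatest
    (fun a ha b hb => hDch a (hBsub a ha) b (hBsub b hb))
    ⟨dmin, Finset.mem_filter.2 ⟨hdminD, hBdmin⟩⟩
  have hdBD : dB ∈ s \ C := hBsub dB hdBmem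
  have hdBB : Bp dB := (Finset.mem_filter.1 hdBmem).2
  have KEY : ∀ d ∈ s \ C, ¬ Bp d → cmax < d := by
    intro d0 hd0 hnB0
    have hDBsub : ∀ x, x ∈ (s \ C).filter (fun d => ¬ Bp d) → x ∈ s \ C :=
      fun x hx => (Finset.mem_filter.1 hx).1
    obtain ⟨ds, hdsmem, hdsle⟩ := chainF_exists_least
      (fun a ha b hb => hDch a (hDBsub a ha) b (hDBsub b hb))
      ⟨d0, Finset.mem_filter.2 ⟨hd0, hnB0⟩⟩
    have hdsD : ds ∈ s \ C := hDBsub ds hdsmem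
    have hdsnB : ¬ Bp ds := (Finset.mem_filter.1 hdsmem).2
    have hdsle0 : ds ≤ d0 := hdsle d0 (Finset.mem_filter.2 ⟨hd0, hnB0⟩)
    have hK0 : ∀ d ∈ s \ C, d < ds → Bp d := by
      intro d hd hlt
      by_contra hnB
      exact absurd (hdsle d (Finset.mem_filter.2 ⟨hd, hnB⟩)) hlt.not_ge
    have hdBlt : dB < ds := by
      rcases hDch dB hdBD ds hdsD with h | h
      · exact h.lt_of_ne (by rintro rfl; exact hdsnB hdBB)
      · exact absurd (fun e he hed c hc hce => hdBB e he (le_trans hed h) c hc hce) hdsnB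
    have hdBcov : dB ⋖ ds := by
      obtain ⟨w, hdBw, hwcov⟩ := exists_le_covBy hdBlt
      have hws : w ∈ s := hup dB (hDs dB hdBD) w hdBw
      have hwD : w ∈ s \ C := by
        rw [Finset.mem_sdiff]
        refine ⟨hws, fun hwC => ?_⟩
        have hlt2 : dB < w := hdBw.lt_of_ne (fun h => hDC dB hdBD (by rw [h]; exact hwC))
        exact hDC dB hdBD (hCdown dB (hDs dB hdBD) w hwC hlt2)
      have hwB : Bp w := hK0 w hwD hwcov.1
      have hle : w ≤ dB := hdBge w (Finset.mem_filter.2 ⟨hwD, hwB⟩)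
      have hweq : w = dB := le_antisymm hle hdBw
      rw [← hweq]
      exact hwcov
    have hK1 : ∃ c0 ∈ C, ¬ c0 < dmin ∧ c0 < ds := by
      simp only [hBp] at hdsnB
      push_neg at hdsnB
      obtain ⟨e, he, hed, c0, hc0, hc0e, hnc0⟩ := hdsnB
      rcases hed.lt_or_eq with h | h
      · exact absurd (hK0 e he h e he le_rfl c0 hc0 hc0e) hnc0
      · exact ⟨c0, hc0, hnc0, h ▸ hc0e⟩
    obtain ⟨c0, hc0C, hc0n, hc0lt⟩ := hK1
    obtain ⟨w, hc0w, hwcov⟩ := exists_le_covBy hc0lt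
    have hws : w ∈ s := hup c0 (hCs c0 hc0C) w hc0w
    have hwC : w ∈ C := by
      by_contra hwC
      have hwD : w ∈ s \ C := Finset.mem_sdiff.2 ⟨hws, hwC⟩
      have hwB : Bp w := hK0 w hwD hwcov.1
      have hc0ltw : c0 < w := hc0w.lt_of_ne (fun h => hwC (by rw [← h]; exact hc0C))
      exact hc0n (hF4 w hwD hwB c0 hc0C hc0ltw)
    have hwn : ¬ w < dmin := fun h => hc0n (lt_of_le_of_lt hc0w h)
    by_cases hcm : cmax ≤ w
    · exact lt_of_le_of_lt hcm (lt_of_lt_of_le hwcov.1 hdsle0)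
    · exfalso
      have hwlt : w < cmax := ((hCch w hwC cmax hcmaxC).resolve_right hcm).lt_of_ne
        (fun h => hcm (le_of_eq h.symm))
      have hCupsub : ∀ x, x ∈ C.filter (fun c => w < c) → x ∈ C :=
        fun x hx => (Finset.mem_filter.1 hx).1
      obtain ⟨cp, hcpmem, hcple⟩ := chainF_exists_least
        (fun a ha b hb => hCch a (hCupsub a ha) b (hCupsub b hb))
        ⟨cmax, Finset.mem_filter.2 ⟨hcmaxC, hwlt⟩⟩
      have hcpC : cp ∈ C := hCupsub cp hcpmem
      have hwcp : w < cp := (Finset.mem_filter.1 hcpmem).2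
      have hcpcov : w ⋖ cp := by
        refine ⟨hwcp, fun z h1 h2 => ?_⟩
        have hzs : z ∈ s := hup w hws z h1.le
        have hzC : z ∈ C := by
          by_contra hzC
          exact hzC (hCdown z hzs cp hcpC h2)
        exact absurd (hcple z (Finset.mem_filter.2 ⟨hzC, h1⟩)) h2.not_ge
      apply hN
      refine ⟨dB, ds, w, cp, ne_of_lt hdBlt, ?_, ?_, ?_, ?_, ne_of_lt hwcp,
        hdBcov, hwcov, hcpcov, ?_, ?_⟩
      · intro h; exact hDC dB hdBD (by rw [h]; exact hwC)
      · intro h; exact hDC dB hdBD (by rw [h]; exact hcpC)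
      · intro h; exact hDC ds hdsD (by rw [h]; exact hwC)
      · intro h; exact hDC ds hdsD (by rw [h]; exact hcpC)
      · intro h
        rcases h.lt_or_eq with h | h
        · exact hDC dB hdBD (hCdown dB (hDs dB hdBD) cp hcpC h)
        · exact hDC dB hdBD (by rw [h]; exact hcpC)
      · intro h
        rcases h.lt_or_eq with h | h
        · exact hwn (lt_trans hwcp (hF4 dB hdBD hdBB cp hcpC h))
        · exact hDC dB hdBD (by rw [← h]; exact hcpC)
  set C' := phiInv s C with hC'def
  have hC'sub : C' ⊆ s := by
    intro x hx
    rcases (hmem x).1 hx with ⟨h1, _⟩ | ⟨h1, _⟩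
    · exact hCs x h1
    · exact hDs x h1
  have hC'ne : C'.Nonempty := ⟨dmin, (hmem dmin).2 (Or.inr ⟨hdminD, hBdmin⟩)⟩
  have hC'ch : Chn C' := by
    intro a ha b hb
    rcases (hmem a).1 ha with ⟨ha1, ha2⟩ | ⟨ha1, ha2⟩ <;>
      rcases (hmem b).1 hb with ⟨hb1, hb2⟩ | ⟨hb1, hb2⟩
    · exact hCch a ha1 b hb1
    · exact Or.inl (le_trans ha2.le (hdminle b hb1))
    · exact Or.inr (le_trans hb2.le (hdminle a ha1))
    · exact hDch a ha1 b hb1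
  have hC'down : ∀ y ∈ s, ∀ c ∈ C', y < c → y ∈ C' := by
    intro y hy x hx hyx
    rcases (hmem x).1 hx with ⟨h1, h2⟩ | ⟨h1, h2⟩
    · have hyC : y ∈ C := hCdown y hy x h1 hyx
      exact (hmem y).2 (Or.inl ⟨hyC, lt_trans hyx h2⟩)
    · by_cases hyC : y ∈ C
      · exact (hmem y).2 (Or.inl ⟨hyC, hF4 x h1 h2 y hyC hyx⟩)
      · have hyD : y ∈ s \ C := Finset.mem_sdiff.2 ⟨hy, hyC⟩
        refine (hmem y).2 (Or.inr ⟨hyD, ?_⟩)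
        intro e he hey c hc hce
        exact h2 e he (le_trans hey hyx.le) c hc hce
  have hcomp : ∀ x, x ∈ s \ C' ↔ ((x ∈ C ∧ ¬ x < dmin) ∨ (x ∈ s \ C ∧ ¬ Bp x)) := by
    intro x
    rw [Finset.mem_sdiff]
    constructor
    · rintro ⟨hxs, hxC'⟩
      by_cases hxC : x ∈ C
      · exact Or.inl ⟨hxC, fun h => hxC' ((hmem x).2 (Or.inl ⟨hxC, h⟩))⟩
      · exact Or.inr ⟨Finset.mem_sdiff.2 ⟨hxs, hxC⟩,
          fun h => hxC' ((hmem x).2 (Or.inr ⟨Finset.mem_sdiff.2 ⟨hxs, hxC⟩, h⟩))⟩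
    · rintro (⟨h1, h2⟩ | ⟨h1, h2⟩)
      · refine ⟨hCs x h1, fun hx => ?_⟩
        rcases (hmem x).1 hx with ⟨_, h⟩ | ⟨h, _⟩
        · exact h2 h
        · exact hDC x h h1
      · refine ⟨hDs x h1, fun hx => ?_⟩
        rcases (hmem x).1 hx with ⟨h, _⟩ | ⟨_, h⟩
        · exact hDC x h1 h
        · exact h2 h
  have hD'ch : Chn (s \ C') := by
    intro a ha b hb
    rcases (hcomp a).1 ha with ⟨ha1, ha2⟩ | ⟨ha1, ha2⟩ <;>
      rcases (hcomp b).1 hb with ⟨hb1, hb2⟩ | ⟨hb1, hb2⟩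
    · exact hCch a ha1 b hb1
    · exact Or.inl (le_trans (hcmaxge a ha1) (KEY b hb1 hb2).le)
    · exact Or.inr (le_trans (hcmaxge b hb1) (KEY a ha1 ha2).le)
    · exact hDch a ha1 b hb1
  have hTT' : TT s C' := ⟨hC'ne, hC'sub, hC'ch, hC'down, hD'ch⟩
  have hcmaxmem : cmax ∈ C.filter (fun c => ¬ c < dmin) :=
    Finset.mem_filter.2 ⟨hcmaxC, hcmaxnlt⟩
  obtain ⟨cm0, hcm0mem, hcm0le⟩ := chainF_exists_least
    (fun a ha b hb => hCch a (Finset.mem_filter.1 ha).1 b (Finset.mem_filter.1 hb).1)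
    ⟨cmax, hcmaxmem⟩
  have hcm0C : cm0 ∈ C := (Finset.mem_filter.1 hcm0mem).1
  have hcm0n : ¬ cm0 < dmin := (Finset.mem_filter.1 hcm0mem).2
  have hAltcm0 : ∀ c ∈ C, c < dmin → c < cm0 := by
    intro c hc hcd
    rcases hCch c hc cm0 hcm0C with h | h
    · exact h.lt_of_ne (by rintro rfl; exact hcm0n hcd)
    · exact absurd (lt_of_le_of_lt h hcd) hcm0n
  have hcm0least : cm0 ∈ s \ C' ∧ ∀ e ∈ s \ C', cm0 ≤ e := by
    refine ⟨(hcomp cm0).2 (Or.inl ⟨hcm0C, hcm0n⟩), ?_⟩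
    intro e he
    rcases (hcomp e).1 he with ⟨h1, h2⟩ | ⟨h1, h2⟩
    · exact hcm0le e (Finset.mem_filter.2 ⟨h1, h2⟩)
    · exact le_trans (hcmaxge cm0 hcm0C) (KEY e h1 h2).le
  have hmem' : ∀ x, x ∈ phiInv s C' ↔ ((x ∈ C' ∧ x < cm0) ∨
      (x ∈ s \ C' ∧ ∀ e ∈ s \ C', e ≤ x → ∀ c ∈ C', c < e → c < cm0)) :=
    phiInv_mem hcm0least
  have hinv : phiInv s C' = C := by
    ext x
    rw [hmem' x]
    constructor
    · rintro (⟨h1, h2⟩ | ⟨h1, h2⟩)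
      · rcases (hmem x).1 h1 with ⟨h3, _⟩ | ⟨h3, _⟩
        · exact h3
        · exact absurd (hCdown x (hDs x h3) cm0 hcm0C h2) (hDC x h3)
      · rcases (hcomp x).1 h1 with ⟨h3, _⟩ | ⟨h3, h4⟩
        · exact h3
        · exfalso
          have hDBsub : ∀ z, z ∈ (s \ C).filter (fun d => ¬ Bp d) → z ∈ s \ C :=
            fun z hz => (Finset.mem_filter.1 hz).1
          obtain ⟨ds, hdsmem, hdsle⟩ := chainF_exists_least
            (fun a ha b hb => hDch a (hDBsub a ha) b (hDBsub b hb))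
            ⟨x, Finset.mem_filter.2 ⟨h3, h4⟩⟩
          have hdsD : ds ∈ s \ C := hDBsub ds hdsmem
          have hdsnB : ¬ Bp ds := (Finset.mem_filter.1 hdsmem).2
          have hdsD' : ds ∈ s \ C' := (hcomp ds).2 (Or.inr ⟨hdsD, hdsnB⟩)
          have hdsx : ds ≤ x := hdsle x (Finset.mem_filter.2 ⟨h3, h4⟩)
          have hdBC' : dB ∈ C' := (hmem dB).2 (Or.inr ⟨hdBD, hdBB⟩)
          have hdBlt : dB < ds := by
            rcases hDch dB hdBD ds hdsD with h | h
            · exact h.lt_of_ne (by rintro rfl; exact hdsnB hdBB)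
            · exact absurd (fun e he hed c hc hce => hdBB e he (le_trans hed h) c hc hce) hdsnB
          have hfin := h2 ds hdsD' hdsx dB hdBC' hdBlt
          exact hDC dB hdBD (hCdown dB (hDs dB hdBD) cm0 hcm0C hfin)
    · intro hxC
      by_cases hxA : x < dmin
      · exact Or.inl ⟨(hmem x).2 (Or.inl ⟨hxC, hxA⟩), hAltcm0 x hxC hxA⟩
      · refine Or.inr ⟨(hcomp x).2 (Or.inl ⟨hxC, hxA⟩), ?_⟩
        intro e he hex c hc hce
        rcases (hcomp e).1 he with ⟨h1, _⟩ | ⟨h1, h2⟩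
        · rcases (hmem c).1 hc with ⟨h3, h4⟩ | ⟨h3, _⟩
          · exact hAltcm0 c h3 h4
          · exact absurd (hCdown c (hDs c h3) e h1 hce) (hDC c h3)
        · exact absurd (lt_of_le_of_lt (hcmaxge x hxC) (lt_of_lt_of_le (KEY e h1 h2) hex))
            (lt_irrefl x)
  have hnefin : phiInv s C ≠ C := by
    intro h
    apply hdminC
    rw [← h]
    exact (hmem dmin).2 (Or.inr ⟨hdminD, hBdmin⟩)
  exact ⟨hTT', hinv, hnefin⟩

end Aux6

section Main
variable [PartialOrder α] [DecidableEq α] [Fintype α]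

theorem phi_finite (t : Finset α) : {l : List α | GreedyFrom none t l}.Finite := by
  apply Set.Finite.subset (List.finite_length_le α (Fintype.card α))
  intro l hl
  obtain ⟨hnd, htf⟩ := greedyFrom_nodup_toFinset hl
  simp only [Set.mem_setOf_eq]
  calc l.length = l.toFinset.card := (List.toFinset_card_of_nodup hnd).symm
  _ ≤ Fintype.card α := Finset.card_le_univ _

theorem blocks_finite (s : Finset α) :
    {c : List α | c ≠ [] ∧ GreedyChain none s c}.Finite := by
  apply Set.Finite.subset (List.finite_length_le α (Fintype.card α))
  intro c hc
  obtain ⟨hsub, hnd, _⟩ := greedyChain_props hc.2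
  simp only [Set.mem_setOf_eq]
  calc c.length = c.toFinset.card := (List.toFinset_card_of_nodup hnd).symm
  _ ≤ Fintype.card α := Finset.card_le_univ _

theorem TT_even (hN : ¬ HasN α) {s : Finset α} (hup : IsUpF s) (hnc : ¬ Chn s) :
    Even ((Set.toFinite {C : Finset α | TT s C}).toFinset).card := by
  apply even_card_of_fpf _ (phiInv s)
  · intro C hC
    rw [Set.Finite.mem_toFinset] at hC ⊢
    exact (phiInv_main hN hup hnc hC).1
  · intro C hC
    rw [Set.Finite.mem_toFinset] at hC
    exact (phiInv_main hN hup hnc hC).2.1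
  · intro C hC
    rw [Set.Finite.mem_toFinset] at hC
    exact (phiInv_main hN hup hnc hC).2.2

theorem main_even (hN : ¬ HasN α) :
    ∀ (n : ℕ) (s : Finset α), s.card ≤ n → IsUpF s → ¬ Chn s →
      Even {l : List α | GreedyFrom (none : Option α) s l}.ncard := by
  intro n
  induction n with
  | zero =>
    intro s hcard hup hnc
    exfalso
    apply hnc
    have hs : s = ∅ := Finset.card_eq_zero.1 (Nat.le_zero.1 hcard)
    subst hs
    intro a ha
    simp at ha
  | succ n ih =>
    intro s hcard hup hnc
    classical
    have hsne : s ≠ ∅ := by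
      rintro rfl
      exact hnc (fun a ha => by simp at ha)
    have hBFmem : ∀ c, c ∈ (blocks_finite s).toFinset ↔ (c ≠ [] ∧ GreedyChain none s c) :=
      fun c => Set.Finite.mem_toFinset _
    have hpart : (phi_finite s).toFinset = (blocks_finite s).toFinset.biUnion
        (fun c => ((phi_finite (s \ c.toFinset)).toFinset).image (c ++ ·)) := by
      ext l
      rw [Set.Finite.mem_toFinset, Set.mem_setOf_eq]
      constructor
      · intro hl
        cases l with
        | nil => exact absurd hl hsne
        | cons x l' =>
          obtain ⟨hx, hrest⟩ := hl
          obtain ⟨C', t, hC', ht, hlt⟩ := greedyFrom_split hrest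
          rw [Finset.mem_biUnion]
          refine ⟨x :: C', (hBFmem _).2 ⟨by simp, hx, fun q h => absurd h (by simp), hC'⟩, ?_⟩
          rw [Finset.mem_image]
          refine ⟨t, ?_, by simp [hlt]⟩
          rw [Set.Finite.mem_toFinset, Set.mem_setOf_eq, sdiff_cons_toFinset]
          exact ht
      · intro hl
        rw [Finset.mem_biUnion] at hl
        obtain ⟨c, hc, hl⟩ := hl
        rw [Finset.mem_image] at hl
        obtain ⟨t, ht, rfl⟩ := hl
        rw [Set.Finite.mem_toFinset, Set.mem_setOf_eq] at ht
        exact greedyChain_append ((hBFmem c).1 hc).2 ht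
    have hdisj : ∀ c1 ∈ (blocks_finite s).toFinset, ∀ c2 ∈ (blocks_finite s).toFinset, c1 ≠ c2 →
        Disjoint (((phi_finite (s \ c1.toFinset)).toFinset).image (c1 ++ ·))
                 (((phi_finite (s \ c2.toFinset)).toFinset).image (c2 ++ ·)) := by
      intro c1 h1 c2 h2 hne
      rw [Finset.disjoint_left]
      intro l hl1 hl2
      rw [Finset.mem_image] at hl1 hl2
      obtain ⟨t1, _, he1⟩ := hl1
      obtain ⟨t2, _, he2⟩ := hl2
      apply hne
      exact greedyChain_unique ((hBFmem c1).1 h1).2 ((hBFmem c2).1 h2).2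
        ((hBFmem c1).1 h1).1 ((hBFmem c2).1 h2).1 (he1.trans he2.symm)
    have hcard2 : (phi_finite s).toFinset.card
        = ∑ c ∈ (blocks_finite s).toFinset, ((phi_finite (s \ c.toFinset)).toFinset).card := by
      rw [hpart, Finset.card_biUnion hdisj]
      exact Finset.sum_congr rfl
        (fun c _ => Finset.card_image_of_injective _ (fun a b h => List.append_cancel_left h))
    rw [Set.ncard_eq_toFinset_card _ (phi_finite s), hcard2,
      ← Finset.sum_filter_add_sum_filter_not (blocks_finite s).toFinset
        (fun c => Chn (s \ c.toFinset))]
    refine Even.add ?_ ?_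
    · have hone : ∀ c ∈ (blocks_finite s).toFinset.filter (fun c => Chn (s \ c.toFinset)),
          ((phi_finite (s \ c.toFinset)).toFinset).card = 1 := by
        intro c hc
        rw [Finset.mem_filter] at hc
        obtain ⟨l0, hl0, huniq⟩ := chain_greedy_unique (s \ c.toFinset) hc.2 none
        rw [Finset.card_eq_one]
        refine ⟨l0, ?_⟩
        ext l
        rw [Set.Finite.mem_toFinset, Set.mem_setOf_eq, Finset.mem_singleton]
        exact ⟨fun h => huniq l h, fun h => h ▸ hl0⟩
      rw [Finset.sum_congr rfl hone, ← Finset.card_eq_sum_ones]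
      have heven := TT_even hN hup hnc
      have hbij : ((blocks_finite s).toFinset.filter (fun c => Chn (s \ c.toFinset))).card
          = ((Set.toFinite {C : Finset α | TT s C}).toFinset).card := by
        refine Finset.card_bij (fun c _ => c.toFinset) ?_ ?_ ?_
        · intro c hc
          rw [Finset.mem_filter] at hc
          rw [Set.Finite.mem_toFinset, Set.mem_setOf_eq]
          exact TT_of_block ((hBFmem c).1 hc.1).2 ((hBFmem c).1 hc.1).1 hc.2
        · intro c1 h1 c2 h2 heq
          rw [Finset.mem_filter] at h1 h2
          exact chain'_lt_toFinset_eq (greedyChain_props ((hBFmem c1).1 h1.1).2).2.2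
            (greedyChain_props ((hBFmem c2).1 h2.1).2).2.2 heq
        · intro X hX
          rw [Set.Finite.mem_toFinset, Set.mem_setOf_eq] at hX
          obtain ⟨Cl, hch, htf, hne, hgc⟩ := block_of_TT hnc hX
          refine ⟨Cl, ?_, htf⟩
          rw [Finset.mem_filter]
          refine ⟨(hBFmem Cl).2 ⟨hne, hgc⟩, ?_⟩
          rw [htf]
          exact hX.2.2.2.2
      rw [hbij]
      exact heven
    · apply even_iff_two_dvd.2
      apply Finset.dvd_sum
      intro c hc
      rw [Finset.mem_filter] at hc
      have hcblk := (hBFmem c).1 hc.1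
      have hsub2 : c.toFinset ⊆ s := (greedyChain_props hcblk.2).1
      have hne2 : c.toFinset.Nonempty := by
        cases c with
        | nil => exact absurd rfl hcblk.1
        | cons x c' => exact ⟨x, by simp⟩
      have hss : s \ c.toFinset ⊂ s := Finset.sdiff_ssubset hsub2 hne2
      have hltcard : (s \ c.toFinset).card < s.card := Finset.card_lt_card hss
      have hupd : IsUpF (s \ c.toFinset) := by
        intro a ha b hab
        rw [Finset.mem_sdiff] at ha ⊢
        refine ⟨hup a ha.1 b hab, fun hbC => ?_⟩
        rcases hab.lt_or_eq with h | h
        · exact ha.2 (greedyChain_down hcblk.2 a ha.1 b (List.mem_toFinset.1 hbC) h)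
        · exact ha.2 (by rw [h]; exact hbC)
      have hih := ih (s \ c.toFinset) (by omega) hupd hc.2
      rw [Set.ncard_eq_toFinset_card _ (phi_finite _)] at hih
      exact even_iff_two_dvd.1 hih

end Main


/-- Every finite N-free ordered set which is not a chain has an even number of greedy
linear extensions. -/
theorem nfree_even_number_of_greedy_linear_extensions [Fintype α] [DecidableEq α]
    [PartialOrder α] (hNfree : ¬ HasN α) (hnotchain : ∃ x y : α, ¬ x ≤ y ∧ ¬ y ≤ x) :
    Even {l : List α | IsGreedyLE l}.ncard := by
  have huniv : IsUpF (Finset.univ : Finset α) := fun a _ b _ => Finset.mem_univ b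
  have hnc : ¬ Chn (Finset.univ : Finset α) := by
    obtain ⟨x, y, hxy, hyx⟩ := hnotchain
    intro h
    rcases h x (Finset.mem_univ x) y (Finset.mem_univ y) with h | h
    exacts [hxy h, hyx h]
  have h := main_even hNfree Finset.univ.card Finset.univ le_rfl huniv hnc
  exact h
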